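/- For every finite forest F = (V, E) (a simple graph with no cycles) and all elements x, y of a commutative ring, the Potts model depends only on the number of vertices and connected components: Z(F, x, y) = x^{k(F)} · (x + y)^{|V| − k(F)}, where k(F) is the number of connected components of F. -/

import Mathlib

open Finset
open SimpleGraph in
section

private lemma reach_decomp {V : Type*} {G : SimpleGraph V} (a b : V) {u v : V}
    (w : G.Walk u v) :
    (G.deleteEdges {s(a,b)}).Reachable u v ∨
    ((G.deleteEdges {s(a,b)}).Reachable u a ∧ (G.deleteEdges {s(a,b)}).Reachable b v) ∨
    ((G.deleteEdges {s(a,b)}).Reachable u b ∧ (G.deleteEdges {s(a,b)}).Reachable a v) := by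
  set G' := G.deleteEdges {s(a,b)} with hG'
  induction w with
  | nil => exact Or.inl (Reachable.refl _)
  | @cons u x v h p ih =>
    by_cases he : s(u, x) = s(a, b)
    · rw [Sym2.eq_iff] at he
      rcases he with ⟨rfl, rfl⟩ | ⟨rfl, rfl⟩
      · rcases ih with h1 | ⟨h2, h3⟩ | ⟨h4, h5⟩
        · exact Or.inr (Or.inl ⟨Reachable.refl _, h1⟩)
        · exact Or.inr (Or.inl ⟨Reachable.refl _, h3⟩)
        · exact Or.inl h5
      · rcases ih with h1 | ⟨h2, h3⟩ | ⟨h4, h5⟩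
        · exact Or.inr (Or.inr ⟨Reachable.refl _, h1⟩)
        · exact Or.inl h3
        · exact Or.inr (Or.inr ⟨Reachable.refl _, h5⟩)
    · have hadj : G'.Adj u x := by
        rw [hG', deleteEdges_adj]
        exact ⟨h, by simpa using he⟩
      rcases ih with h1 | ⟨h2, h3⟩ | ⟨h4, h5⟩
      · exact Or.inl (hadj.reachable.trans h1)
      · exact Or.inr (Or.inl ⟨hadj.reachable.trans h2, h3⟩)
      · exact Or.inr (Or.inr ⟨hadj.reachable.trans h4, h5⟩)

private lemma card_cc_delete {V : Type*} [Fintype V] {G : SimpleGraph V} {a b : V}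
    (hab : G.Adj a b) (hF : G.IsAcyclic) :
    Nat.card (G.deleteEdges {s(a,b)}).ConnectedComponent
      = Nat.card G.ConnectedComponent + 1 := by
  classical
  set G' := G.deleteEdges {s(a,b)} with hG'
  have hle : G' ≤ G := deleteEdges_le _
  have hnr : ¬ G'.Reachable a b := by
    have hb : G.IsBridge s(a, b) := (isAcyclic_iff_forall_adj_isBridge.mp hF) hab
    exact isBridge_iff.mp hb
  have hmap : ∀ u v : V, G.Reachable u v →
      G'.Reachable u v ∨ (G'.Reachable u a ∧ G'.Reachable b v) ∨
      (G'.Reachable u b ∧ G'.Reachable a v) := fun u v h => reach_decomp a b h.some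
  haveI : Fintype G'.ConnectedComponent := Fintype.ofFinite _
  haveI : Fintype G.ConnectedComponent := Fintype.ofFinite _
  -- bijection between components of G' other than that of b, and components of G
  set f : {c : G'.ConnectedComponent // c ≠ G'.connectedComponentMk b} → G.ConnectedComponent :=
    fun c => c.1.map (Hom.ofLE hle) with hf
  have hfmk : ∀ (u : V) (h : _), f ⟨G'.connectedComponentMk u, h⟩ = G.connectedComponentMk u :=
    fun u h => rfl
  have hbij : Function.Bijective f := by
    constructor
    · rintro ⟨c1, h1⟩ ⟨c2, h2⟩ h
      obtain ⟨u, rfl⟩ := c1.exists_rep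
      obtain ⟨v, rfl⟩ := c2.exists_rep
      have h' : G.Reachable u v := ConnectedComponent.exact h
      rcases hmap u v h' with h' | ⟨h2', h3'⟩ | ⟨h4', h5'⟩
      · exact Subtype.ext (ConnectedComponent.sound h')
      · exact absurd (ConnectedComponent.sound h3'.symm) h2
      · exact absurd (ConnectedComponent.sound h4') h1
    · intro c
      obtain ⟨u, rfl⟩ := c.exists_rep
      by_cases hu : G'.Reachable u b
      · refine ⟨⟨G'.connectedComponentMk a, fun h => hnr (ConnectedComponent.exact h)⟩, ?_⟩
        exact ConnectedComponent.sound (((hu.mono hle).trans hab.symm.reachable)).symm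
      · exact ⟨⟨G'.connectedComponentMk u, fun h => hu (ConnectedComponent.exact h)⟩, rfl⟩
  have hcard : Nat.card {c : G'.ConnectedComponent // c ≠ G'.connectedComponentMk b}
      = Nat.card G.ConnectedComponent := Nat.card_eq_of_bijective f hbij
  have e1 : Nat.card {c : G'.ConnectedComponent // c ≠ G'.connectedComponentMk b}
      = Nat.card G'.ConnectedComponent - 1 := by
    simp only [Nat.card_eq_fintype_card, ne_eq]
    rw [Fintype.card_subtype_compl, Fintype.card_subtype_eq]
  have hpos : 1 ≤ Nat.card G'.ConnectedComponent := by
    rw [Nat.card_eq_fintype_card]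
    exact Fintype.card_pos_iff.mpr ⟨G'.connectedComponentMk b⟩
  omega

private lemma forest_card {V : Type*} [Fintype V] :
    ∀ (n : ℕ) (G : SimpleGraph V), G.edgeSet.ncard = n → G.IsAcyclic →
      Nat.card G.ConnectedComponent + n = Fintype.card V := by
  intro n
  induction n with
  | zero =>
    intro G hn _
    have hG : G = ⊥ := by
      rw [← edgeSet_eq_empty]
      exact Set.ncard_eq_zero (Set.toFinite _) |>.mp hn
    subst hG
    rw [Nat.add_zero]
    have : Nat.card V = Nat.card (⊥ : SimpleGraph V).ConnectedComponent :=
      Nat.card_eq_of_bijective (fun v => (⊥ : SimpleGraph V).connectedComponentMk v)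
        ⟨fun u v h => reachable_bot.mp (ConnectedComponent.exact h),
         fun c => c.exists_rep.imp fun v h => h⟩
    rw [← this, Nat.card_eq_fintype_card]
  | succ n ih =>
    intro G hn hG
    have hne : G.edgeSet.Nonempty := by
      rw [← Set.ncard_pos (Set.toFinite _)] at *
      omega
    obtain ⟨e, he⟩ := hne
    induction e with
    | h a b =>
      have hab : G.Adj a b := he
      have hdel : (G.deleteEdges {s(a,b)}).edgeSet.ncard = n := by
        rw [edgeSet_deleteEdges]
        rw [show (G.edgeSet \ {s(a,b)}).ncard = G.edgeSet.ncard - 1 from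
          Set.ncard_diff_singleton_of_mem he, hn]
        omega
      have hacy : (G.deleteEdges {s(a,b)}).IsAcyclic := fun v c hc =>
        hG (c.mapLe (deleteEdges_le _)) (hc.mapLe _)
      have := ih (G.deleteEdges {s(a,b)}) hdel hacy
      rw [card_cc_delete hab hG] at this
      omega

end

/-- The edge set of a simple graph on a finite vertex type, as a `Finset`. -/
noncomputable def edgeFinset' {α : Type*} [Fintype α] (G : SimpleGraph α) :
    Finset (Sym2 α) :=
  (Set.toFinite G.edgeSet).toFinset

/-- The number of connected components of a graph. -/
noncomputable def ncomp {α : Type*} (G : SimpleGraph α) : ℕ :=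
  Nat.card G.ConnectedComponent

/-- The Potts model `Z(G, x, y) = Σ_{A ⊆ E} x^{c(V,A)} y^{|A|}`, where `c(V,A)` is the
number of connected components of the spanning subgraph `(V, A)`. -/
noncomputable def potts {α : Type*} [Fintype α] {R : Type*} [CommRing R]
    (G : SimpleGraph α) (x y : R) : R :=
  ∑ A ∈ (edgeFinset' G).powerset,
    x ^ ncomp (SimpleGraph.fromEdgeSet (A : Set (Sym2 α))) * y ^ A.card

/-- The subgraph counting polynomial
`H(G, v, x, y) = Σ_{(W,F), W ⊆ V, F ⊆ E(G[W])} v^{|W|} x^{c(W,F)} y^{|F|}`,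
where `c(W,F)` is the number of connected components of the graph `(W, F)`. -/
noncomputable def scp {α : Type*} [Fintype α] {R : Type*} [CommRing R]
    (G : SimpleGraph α) (v x y : R) : R :=
  ∑ W : Finset α, ∑ F ∈ (edgeFinset' (G.induce (W : Set α))).powerset,
    v ^ W.card * x ^ ncomp (SimpleGraph.fromEdgeSet (F : Set (Sym2 (W : Set α)))) * y ^ F.card

/-- The subgraph component polynomial `Q(G, v, x) = Σ_{W ⊆ V} v^{|W|} x^{k(G[W])}`. -/
noncomputable def subgraphCompPoly {α : Type*} [Fintype α] {R : Type*} [CommRing R]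
    (G : SimpleGraph α) (v x : R) : R :=
  ∑ W : Finset α, v ^ W.card * x ^ ncomp (G.induce (W : Set α))

/-- The number of bad monochromatic edges of a coloring `φ : α → Fin x` (colors `1, …, x`
identified with `Fin x` via `c ↦ c + 1`): edges all of whose vertices get the same color
`c ≤ y`, i.e. `(c : ℕ) < y`. -/
noncomputable def badCount {α : Type*} {x : ℕ} (G : SimpleGraph α) (y : ℕ)
    (φ : α → Fin x) : ℕ :=
  {e ∈ G.edgeSet | ∃ c : Fin x, (c : ℕ) < y ∧ ∀ w ∈ e, φ w = c}.ncard

/-- The number of monochromatic edges of a coloring `φ : α → Fin x`. -/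
noncomputable def monoCount {α : Type*} {x : ℕ} (G : SimpleGraph α)
    (φ : α → Fin x) : ℕ :=
  {e ∈ G.edgeSet | ∃ c : Fin x, ∀ w ∈ e, φ w = c}.ncard

/-- The bad coloring polynomial `χ̃(G, x, z) = Σ_{φ : V → {1,…,x}} z^{m(φ)}`, where `m(φ)`
is the number of monochromatic edges of `φ`. -/
noncomputable def badChrom {α : Type*} [Fintype α] [DecidableEq α] {R : Type*} [CommRing R]
    (G : SimpleGraph α) (x : ℕ) (z : R) : R :=
  ∑ φ : α → Fin x, z ^ monoCount G φ

/-- The trivariate chromatic polynomial `P̃(G, x, y, z) = Σ_{φ : V → {1,…,x}} z^{b(φ)}`,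
where `b(φ)` is the number of bad monochromatic edges of `φ` (monochromatic in a color
`c ≤ y`). -/
noncomputable def triChrom {α : Type*} [Fintype α] [DecidableEq α] {R : Type*} [CommRing R]
    (G : SimpleGraph α) (x y : ℕ) (z : R) : R :=
  ∑ φ : α → Fin x, z ^ badCount G y φ

/-- The subgraph counting polynomial as a polynomial with integer coefficients in the
variables `v = X 0`, `x = X 1`, `y = X 2`. -/
noncomputable def scpPoly {α : Type*} [Fintype α] (G : SimpleGraph α) :
    MvPolynomial (Fin 3) ℤ :=
  scp G (MvPolynomial.X 0) (MvPolynomial.X 1) (MvPolynomial.X 2)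

/-- For a forest `F`,
`Z(F, x, y) = x^{k(F)} · (x + y)^{|V| − k(F)}`. -/
theorem potts_of_isAcyclic {V : Type*} [Fintype V] {R : Type*} [CommRing R]
    (F : SimpleGraph V) (hF : F.IsAcyclic) (x y : R) :
    potts F x y = x ^ ncomp F * (x + y) ^ (Fintype.card V - ncomp F) := by
  classical
  set n := Fintype.card V with hn
  set m := (edgeFinset' F).card with hmdef
  set k := ncomp F with hkdef
  have hE : ((edgeFinset' F : Finset (Sym2 V)) : Set (Sym2 V)) = F.edgeSet :=
    Set.Finite.coe_toFinset _
  have hm : F.edgeSet.ncard = m := by rw [← hE, Set.ncard_coe_finset]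
  have hkm : k + m = n := forest_card m F hm hF
  have hcomp : ∀ A ∈ (edgeFinset' F).powerset,
      ncomp (SimpleGraph.fromEdgeSet (A : Set (Sym2 V))) = n - A.card := by
    intro A hA
    rw [Finset.mem_powerset] at hA
    have hAsub : (A : Set (Sym2 V)) ⊆ F.edgeSet := by
      rw [← hE]; exact_mod_cast hA
    have hle : SimpleGraph.fromEdgeSet (A : Set (Sym2 V)) ≤ F := by
      have := SimpleGraph.fromEdgeSet_mono hAsub
      rwa [SimpleGraph.fromEdgeSet_edgeSet] at this
    have hacy : (SimpleGraph.fromEdgeSet (A : Set (Sym2 V))).IsAcyclic :=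
      fun v c hc => hF (c.mapLe hle) (hc.mapLe _)
    have hes : (SimpleGraph.fromEdgeSet (A : Set (Sym2 V))).edgeSet = (A : Set (Sym2 V)) := by
      rw [SimpleGraph.edgeSet_fromEdgeSet]
      ext e
      simp only [Set.mem_diff, Set.mem_setOf_eq, and_iff_left_iff_imp]
      exact fun he => SimpleGraph.not_isDiag_of_mem_edgeSet F (hAsub he)
    have := forest_card A.card (SimpleGraph.fromEdgeSet (A : Set (Sym2 V)))
      (by rw [hes, Set.ncard_coe_finset]) hacy
    unfold ncomp
    omega
  have hcardle : ∀ A ∈ (edgeFinset' F).powerset, A.card ≤ m :=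
    fun A hA => Finset.card_le_card (Finset.mem_powerset.mp hA)
  calc potts F x y
      = ∑ A ∈ (edgeFinset' F).powerset, x ^ k * (x ^ (m - A.card) * y ^ A.card) := by
        refine Finset.sum_congr rfl fun A hA => ?_
        rw [hcomp A hA, show n - A.card = k + (m - A.card) by
          have := hcardle A hA; omega, pow_add, mul_assoc]
    _ = x ^ k * ∑ A ∈ (edgeFinset' F).powerset, x ^ (m - A.card) * y ^ A.card := by
        rw [Finset.mul_sum]
    _ = x ^ k * (x + y) ^ (n - k) := by
        congr 1
        have := Finset.prod_add (fun _ : Sym2 V => y) (fun _ : Sym2 V => x) (edgeFinset' F)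
        simp only [Finset.prod_const] at this
        rw [show n - k = m by omega, add_comm x y, this]
        refine Finset.sum_congr rfl fun A hA => ?_
        rw [Finset.card_sdiff_of_subset (Finset.mem_powerset.mp hA), mul_comm]
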